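/- arXiv:2404.06313 — 2 statements merged into one kernel-verified Lean document; each statement's English description precedes it below -/
import Mathlib

section
/- Let A and B be nonempty subsets of ℝ^n with inf_{a∈A, b∈B} ‖a−b‖₂ = d₀ > 0, and let x ∈ ℝ^n be a test point from class A such that dist₂(x, A_N) → 0 as N → ∞, where A_N ⊆ A are the training samples of class A among the first N samples, and all class-B training points lie in B. Then for every ε < d₀/2, there exists N₀ such that for all N ≥ N₀, every perturbation v with ‖v‖₂ < ε leaves x + v closer to A_N than to any class-B training point; i.e., the 1NN classifier is asymptotically robust at x with ℓ2 radius up to d₀/2. -/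
/-- Asymptotic robustness of 1NN at a test point: if the class supports `A`,
`B` are separated by `d₀ > 0`, the test point `x ∈ A` has nearest-neighbor
distance to the class-`A` training samples `A_N` tending to `0`, and the
class-`B` training points all lie in `B`, then for every radius `ε < d₀/2`,
eventually every ℓ2-perturbation of `x` of norm `< ε` is classified correctly. -/
theorem stmt_8 {n : ℕ} (A B : Set (EuclideanSpace ℝ (Fin n)))
    (hAne : A.Nonempty) (hBne : B.Nonempty)
    (d₀ : ℝ) (hd₀ : 0 < d₀)
    (hsep : ∀ a ∈ A, ∀ b ∈ B, d₀ ≤ dist a b)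
    (x : EuclideanSpace ℝ (Fin n)) (hx : x ∈ A)
    (A_N B_N : ℕ → Set (EuclideanSpace ℝ (Fin n)))
    (hAN : ∀ N, A_N N ⊆ A) (hBN : ∀ N, B_N N ⊆ B)
    (hBNne : ∀ N, (B_N N).Nonempty)
    (hconv : Filter.Tendsto (fun N => Metric.infDist x (A_N N))
      Filter.atTop (nhds 0)) :
    ∀ ε : ℝ, 0 < ε → ε < d₀ / 2 →
      ∃ N₀ : ℕ, ∀ N ≥ N₀, ∀ v : EuclideanSpace ℝ (Fin n), ‖v‖ < ε →
        Metric.infDist (x + v) (A_N N) < Metric.infDist (x + v) (B_N N) := by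
  intro ε hε hε2
  have hev : ∀ᶠ N in Filter.atTop, Metric.infDist x (A_N N) < d₀ - 2 * ε := by
    have : (0 : ℝ) < d₀ - 2 * ε := by linarith
    exact hconv.eventually (eventually_lt_nhds this)
  obtain ⟨N₀, hN₀⟩ := Filter.eventually_atTop.mp hev
  refine ⟨N₀, fun N hN v hv => ?_⟩
  have hdv : dist (x + v) x = ‖v‖ := by
    simp [dist_eq_norm]
  have h1 : Metric.infDist (x + v) (A_N N) ≤ Metric.infDist x (A_N N) + dist (x + v) x :=
    Metric.infDist_le_infDist_add_dist
  have h2 : d₀ - ‖v‖ ≤ Metric.infDist (x + v) (B_N N) := by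
    by_contra hcon
    push_neg at hcon
    obtain ⟨b, hb, hdb⟩ := (Metric.infDist_lt_iff (hBNne N)).mp hcon
    have hd : d₀ ≤ dist x b := hsep x hx b (hBN N hb)
    have ht : dist x b ≤ dist x (x + v) + dist (x + v) b := dist_triangle _ _ _
    have : dist x (x + v) = ‖v‖ := by rw [dist_comm]; exact hdv
    linarith
  have hxA := hN₀ N hN
  have hv0 : 0 ≤ ‖v‖ := norm_nonneg v
  rw [hdv] at h1
  linarith
end

section
/- In ℝ^n with n ≥ 1, suppose the binary 1NN classifier has training sets A and B with ℓ2 class distance d₀ > 0. Then the decision boundary {x : dist₂(x, A) = dist₂(x, B)} has ℓ2 distance at least d₀/2 from every training point. -/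
/-- The 1NN decision boundary `{x : dist₂(x,A) = dist₂(x,B)}` lies at ℓ2
distance at least `d₀/2` from every training point, where `d₀ > 0` is the ℓ2
class distance. -/
theorem stmt_10 {n : ℕ} (hn : 1 ≤ n)
    (A B : Set (EuclideanSpace ℝ (Fin n)))
    (hA : A.Finite) (hB : B.Finite) (hAne : A.Nonempty) (hBne : B.Nonempty)
    (d₀ : ℝ) (hd₀ : 0 < d₀)
    (hsep : ∀ a ∈ A, ∀ b ∈ B, d₀ ≤ dist a b) :
    ∀ x : EuclideanSpace ℝ (Fin n),
      Metric.infDist x A = Metric.infDist x B →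
      ∀ t ∈ A ∪ B, d₀ / 2 ≤ dist x t := by
  intro x hx t ht
  by_contra h
  push_neg at h
  rcases ht with htA | htB
  · have h1 : Metric.infDist x A < d₀ / 2 :=
      lt_of_le_of_lt (Metric.infDist_le_dist_of_mem htA) h
    have h2 : d₀ / 2 ≤ Metric.infDist x B := by
      refine le_of_not_gt fun hlt => ?_
      obtain ⟨b, hb, hbd⟩ := (Metric.infDist_lt_iff hBne).mp hlt
      have := hsep t htA b hb
      have htri := dist_triangle t x b
      rw [dist_comm t x] at htri
      linarith
    linarith
  · have h1 : Metric.infDist x B < d₀ / 2 :=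
      lt_of_le_of_lt (Metric.infDist_le_dist_of_mem htB) h
    have h2 : d₀ / 2 ≤ Metric.infDist x A := by
      refine le_of_not_gt fun hlt => ?_
      obtain ⟨a, ha, had⟩ := (Metric.infDist_lt_iff hAne).mp hlt
      have := hsep a ha t htB
      have htri := dist_triangle a x t
      rw [dist_comm a x] at htri
      linarith
    linarith
end
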